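/- arXiv:1901.09206 — 2 statements merged into one kernel-verified Lean document; each statement's English description precedes it below -/
import Mathlib

section
/- Let P = w·N(0,1) + (1−w)·N(0, σ_q²) and Q = N(0,1), with Gaussian kernel of bandwidth σ² > 0. Then MMD²(P,Q) = (1−w)² [ c(2) + c(2σ_q²) − 2c(1+σ_q²) ], where c(z) := √(σ²/(σ²+z)). -/
open Real MeasureTheory ProbabilityTheory
open scoped NNReal ENNReal

lemma kernel_integrable {σ : ℝ} (hσ : 0 < σ) (x : ℝ) (μ : Measure ℝ) [IsFiniteMeasure μ] :
    Integrable (fun y => Real.exp (-(x - y) ^ 2 / (2 * σ ^ 2))) μ := by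
  refine (integrable_const (1 : ℝ)).mono' ?_ ?_
  · exact (Continuous.rexp (by continuity)).aestronglyMeasurable
  · refine Filter.Eventually.of_forall fun y => ?_
    rw [Real.norm_eq_abs, abs_of_pos (Real.exp_pos _)]
    apply Real.exp_le_one_iff.mpr
    apply div_nonpos_of_nonpos_of_nonneg
    · simpa using sq_nonneg (x - y)
    · positivity

lemma gaussian_conv {t : ℝ} (ht : 0 < t) (v : ℝ≥0) (hv : v ≠ 0) (x : ℝ) :
    ∫ y, Real.exp (-(x - y) ^ 2 / (2 * t)) ∂(gaussianReal 0 v) =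
      Real.sqrt (t / (t + v)) * Real.exp (-x ^ 2 / (2 * (t + v))) := by
  have hv0 : (0 : ℝ) < (v : ℝ) := by positivity
  have htv : (0 : ℝ) < t + v := by linarith
  rw [gaussianReal_of_var_ne_zero _ hv]
  have hd : (gaussianPDF 0 v) = fun y => ((gaussianPDFReal 0 v y).toNNReal : ℝ≥0∞) := rfl
  rw [hd, integral_withDensity_eq_integral_smul
    ((measurable_gaussianPDFReal 0 v).real_toNNReal) _]
  have hco : ∀ y : ℝ, ((gaussianPDFReal 0 v y).toNNReal : ℝ) = gaussianPDFReal 0 v y :=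
    fun y => Real.coe_toNNReal _ (gaussianPDFReal_nonneg 0 v y)
  have hpt : ∀ y : ℝ, gaussianPDFReal 0 v y * Real.exp (-(x - y) ^ 2 / (2 * t))
      = (Real.sqrt (2 * π * v))⁻¹ *
        Real.exp (-((t + v) / (2 * t * v)) * (y - v * x / (t + v)) ^ 2
          + -x ^ 2 / (2 * (t + v))) := by
    intro y
    rw [gaussianPDFReal]
    rw [mul_assoc, ← Real.exp_add]
    congr 2
    field_simp
    ring
  simp_rw [NNReal.smul_def, smul_eq_mul, hco, hpt]
  rw [integral_const_mul]
  simp_rw [Real.exp_add]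
  rw [integral_mul_const]
  have key : ∫ y : ℝ, Real.exp (-((t + v) / (2 * t * v)) * (y - v * x / (t + v)) ^ 2)
      = Real.sqrt (π / ((t + v) / (2 * t * v))) := by
    rw [← integral_gaussian]
    exact (integral_sub_right_eq_self (fun z => Real.exp (-((t + v) / (2 * t * v)) * z ^ 2))
      (v * x / (t + v)))
  rw [key, ← mul_assoc]
  congr 1
  rw [← Real.sqrt_inv, ← Real.sqrt_mul (by positivity)]
  congr 1
  field_simp

lemma exp_comp_integrable {f : ℝ → ℝ} (hf : Continuous f) (h : ∀ x, f x ≤ 0)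
    (μ : Measure ℝ) [IsFiniteMeasure μ] :
    Integrable (fun x => Real.exp (f x)) μ := by
  refine (integrable_const (1 : ℝ)).mono' ?_ ?_
  · exact (Real.continuous_exp.comp hf).aestronglyMeasurable
  · refine Filter.Eventually.of_forall fun y => ?_
    rw [Real.norm_eq_abs, abs_of_pos (Real.exp_pos _)]
    exact Real.exp_le_one_iff.mpr (h y)

lemma exp_sq_integrable {s : ℝ} (hs : 0 < s) (μ : Measure ℝ) [IsFiniteMeasure μ] :
    Integrable (fun x => Real.exp (-x ^ 2 / (2 * s))) μ := by
  refine exp_comp_integrable (by continuity) (fun x => ?_) μ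
  apply div_nonpos_of_nonpos_of_nonneg
  · simpa using sq_nonneg x
  · positivity

lemma gaussian_exp {s : ℝ} (hs : 0 < s) (v : ℝ≥0) (hv : v ≠ 0) :
    ∫ x, Real.exp (-x ^ 2 / (2 * s)) ∂(gaussianReal 0 v) = Real.sqrt (s / (s + v)) := by
  have := gaussian_conv hs v hv 0
  simp only [zero_sub, neg_sq, ne_eq, OfNat.ofNat_ne_zero, not_false_eq_true, zero_pow,
    neg_zero, zero_div, Real.exp_zero, mul_one] at this
  exact this

lemma integral_mix (f : ℝ → ℝ) (μ ν : Measure ℝ) [IsFiniteMeasure μ] [IsFiniteMeasure ν]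
    (a b : ℝ≥0) (hfμ : Integrable f μ) (hfν : Integrable f ν) :
    ∫ x, f x ∂(a • μ + b • ν) = a * ∫ x, f x ∂μ + b * ∫ x, f x ∂ν := by
  rw [integral_add_measure hfμ.smul_measure_nnreal hfν.smul_measure_nnreal,
    integral_smul_nnreal_measure, integral_smul_nnreal_measure]
  simp [NNReal.smul_def]

theorem spiky_gaussian_mmd (w σq σ : ℝ) (hw0 : 0 ≤ w) (hw1 : w ≤ 1) (hσq : 0 < σq)
    (hσ : 0 < σ)
    (P : Measure ℝ)
    (hP : P = w.toNNReal • gaussianReal 0 1 +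
      (1 - w).toNNReal • gaussianReal 0 ⟨σq ^ 2, sq_nonneg σq⟩)
    (Q : Measure ℝ) (hQ : Q = gaussianReal 0 1)
    (c : ℝ → ℝ) (hc : ∀ z, c z = Real.sqrt (σ ^ 2 / (σ ^ 2 + z))) :
    (∫ x, ∫ y, Real.exp (-(x - y) ^ 2 / (2 * σ ^ 2)) ∂P ∂P) +
      (∫ x, ∫ y, Real.exp (-(x - y) ^ 2 / (2 * σ ^ 2)) ∂Q ∂Q) -
      2 * ∫ x, ∫ y, Real.exp (-(x - y) ^ 2 / (2 * σ ^ 2)) ∂Q ∂P =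
    (1 - w) ^ 2 * (c 2 + c (2 * σq ^ 2) - 2 * c (1 + σq ^ 2)) := by
  have hσ2 : (0:ℝ) < σ ^ 2 := by positivity
  set vq : ℝ≥0 := ⟨σq ^ 2, sq_nonneg σq⟩ with hvq
  have hcv : (vq : ℝ) = σq ^ 2 := rfl
  have hvq0 : vq ≠ 0 := by
    intro h
    have h2 : σq ^ 2 = 0 := congrArg NNReal.toReal h
    exact pow_ne_zero 2 hσq.ne' h2
  have h1 : (1 : ℝ≥0) ≠ 0 := one_ne_zero
  have hw : ((w.toNNReal : ℝ≥0) : ℝ) = w := Real.coe_toNNReal _ hw0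
  have hw' : (((1 - w).toNNReal : ℝ≥0) : ℝ) = 1 - w := Real.coe_toNNReal _ (by linarith)
  have hs1 : (0:ℝ) < σ ^ 2 + 1 := by positivity
  have hsq : (0:ℝ) < σ ^ 2 + σq ^ 2 := by positivity
  -- inner integral against P
  have hPin : ∀ x : ℝ, (∫ y, Real.exp (-(x - y) ^ 2 / (2 * σ ^ 2)) ∂P) =
      w * (Real.sqrt (σ ^ 2 / (σ ^ 2 + 1)) * Real.exp (-x ^ 2 / (2 * (σ ^ 2 + 1)))) +
      (1 - w) * (Real.sqrt (σ ^ 2 / (σ ^ 2 + σq ^ 2)) *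
        Real.exp (-x ^ 2 / (2 * (σ ^ 2 + σq ^ 2)))) := by
    intro x
    rw [hP, integral_mix _ _ _ _ _ (kernel_integrable hσ x _) (kernel_integrable hσ x _),
      gaussian_conv hσ2 1 h1 x, gaussian_conv hσ2 vq hvq0 x, hw, hw', hcv]
    norm_num
  -- inner integral against Q
  have hQin : ∀ x : ℝ, (∫ y, Real.exp (-(x - y) ^ 2 / (2 * σ ^ 2)) ∂Q) =
      Real.sqrt (σ ^ 2 / (σ ^ 2 + 1)) * Real.exp (-x ^ 2 / (2 * (σ ^ 2 + 1))) := by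
    intro x
    rw [hQ, gaussian_conv hσ2 1 h1 x]
    norm_num
  simp only [hPin, hQin]
  -- integrability of the closed forms
  have I1 : ∀ (μ : Measure ℝ) [IsFiniteMeasure μ],
      Integrable (fun x => Real.sqrt (σ ^ 2 / (σ ^ 2 + 1)) *
        Real.exp (-x ^ 2 / (2 * (σ ^ 2 + 1)))) μ :=
    fun μ _ => (exp_sq_integrable hs1 μ).const_mul _
  have Iq : ∀ (μ : Measure ℝ) [IsFiniteMeasure μ],
      Integrable (fun x => Real.sqrt (σ ^ 2 / (σ ^ 2 + σq ^ 2)) *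
        Real.exp (-x ^ 2 / (2 * (σ ^ 2 + σq ^ 2)))) μ :=
    fun μ _ => (exp_sq_integrable hsq μ).const_mul _
  have Imix : ∀ (μ : Measure ℝ) [IsFiniteMeasure μ],
      Integrable (fun x =>
        w * (Real.sqrt (σ ^ 2 / (σ ^ 2 + 1)) * Real.exp (-x ^ 2 / (2 * (σ ^ 2 + 1)))) +
        (1 - w) * (Real.sqrt (σ ^ 2 / (σ ^ 2 + σq ^ 2)) *
          Real.exp (-x ^ 2 / (2 * (σ ^ 2 + σq ^ 2))))) μ :=
    fun μ _ => ((I1 μ).const_mul w).add ((Iq μ).const_mul (1 - w))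
  rw [hP, hQ,
    integral_mix _ _ _ _ _ (Imix _) (Imix _),
    integral_mix _ _ _ _ _ (I1 _) (I1 _),
    hw, hw']
  rw [integral_add ((I1 _).const_mul w) ((Iq _).const_mul (1 - w)),
    integral_add ((I1 _).const_mul w) ((Iq _).const_mul (1 - w))]
  simp_rw [integral_const_mul]
  rw [gaussian_exp hs1 1 h1, gaussian_exp hs1 vq hvq0,
    gaussian_exp hsq 1 h1, gaussian_exp hsq vq hvq0]
  rw [hcv, NNReal.coe_one]
  have comb : ∀ a b : ℝ, 0 < a → 0 < b →
      Real.sqrt (σ ^ 2 / (σ ^ 2 + a)) * Real.sqrt ((σ ^ 2 + a) / (σ ^ 2 + a + b)) =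
        Real.sqrt (σ ^ 2 / (σ ^ 2 + (a + b))) := by
    intro a b ha hb
    rw [← Real.sqrt_mul (by positivity)]
    congr 1
    have h1 : σ ^ 2 + a ≠ 0 := by positivity
    have h2 : σ ^ 2 + a + b ≠ 0 := by positivity
    field_simp
    ring
  rw [hc 2, hc (2 * σq ^ 2), hc (1 + σq ^ 2)]
  have e1 : Real.sqrt (σ ^ 2 / (σ ^ 2 + 1)) * Real.sqrt ((σ ^ 2 + 1) / (σ ^ 2 + 1 + 1)) =
      Real.sqrt (σ ^ 2 / (σ ^ 2 + 2)) := by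
    rw [comb 1 1 one_pos one_pos]; norm_num
  have e2 : Real.sqrt (σ ^ 2 / (σ ^ 2 + σq ^ 2)) *
      Real.sqrt ((σ ^ 2 + σq ^ 2) / (σ ^ 2 + σq ^ 2 + σq ^ 2)) =
      Real.sqrt (σ ^ 2 / (σ ^ 2 + 2 * σq ^ 2)) := by
    rw [comb (σq ^ 2) (σq ^ 2) (by positivity) (by positivity)]; ring_nf
  have e3 : Real.sqrt (σ ^ 2 / (σ ^ 2 + 1)) * Real.sqrt ((σ ^ 2 + 1) / (σ ^ 2 + 1 + σq ^ 2)) =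
      Real.sqrt (σ ^ 2 / (σ ^ 2 + (1 + σq ^ 2))) := by
    rw [comb 1 (σq ^ 2) one_pos (by positivity)]
  have e4 : Real.sqrt (σ ^ 2 / (σ ^ 2 + σq ^ 2)) *
      Real.sqrt ((σ ^ 2 + σq ^ 2) / (σ ^ 2 + σq ^ 2 + 1)) =
      Real.sqrt (σ ^ 2 / (σ ^ 2 + (1 + σq ^ 2))) := by
    rw [comb (σq ^ 2) 1 (by positivity) one_pos]; ring_nf
  rw [e1, e2, e3, e4]
  ring
end

section
/- For a translation-invariant kernel k(x, x') = ψ(x − x') on ℝ^d with ψ the Fourier transform of a finite nonnegative measure Λ (Bochner), and probability measures P, Q with characteristic functions φ_P, φ_Q, the MMD satisfies MMD²(P,Q) = ∫_{ℝ^d} |φ_P(ω) − φ_Q(ω)|² dΛ(ω). -/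
set_option maxHeartbeats 1000000

open MeasureTheory Complex RealInnerProductSpace

namespace MMDAux

variable {d : ℕ}

local notation "E" => EuclideanSpace ℝ (Fin d)

/-- The elementary exponential kernel. -/
noncomputable def ch (ω x : E) : ℂ := Complex.exp ((⟪ω, x⟫ : ℂ) * Complex.I)

lemma ch_cont_right (ω : E) : Continuous fun x : E => ch ω x :=
  Complex.continuous_exp.comp
    ((Complex.continuous_ofReal.comp (Continuous.inner continuous_const continuous_id)).mul
      continuous_const)

lemma ch_cont_left (x : E) : Continuous fun ω : E => ch ω x :=
  Complex.continuous_exp.comp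
    ((Complex.continuous_ofReal.comp (Continuous.inner continuous_id continuous_const)).mul
      continuous_const)

lemma norm_ch (ω x : E) : ‖ch ω x‖ = 1 :=
  Complex.norm_exp_ofReal_mul_I (⟪ω, x⟫)

/-- Integrability of bounded continuous functions. -/
lemma integrable_of_cont_bdd {A : Type*} [MeasurableSpace A] [TopologicalSpace A]
    [OpensMeasurableSpace A] {G : Type*} [NormedAddCommGroup G]
    [SecondCountableTopologyEither A G]
    (ρ : Measure A) [IsFiniteMeasure ρ] {f : A → G} (hf : Continuous f)
    (C : ℝ) (hC : ∀ a, ‖f a‖ ≤ C) : Integrable f ρ :=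
  (integrable_const C).mono' hf.aestronglyMeasurable (Filter.Eventually.of_forall hC)

/-- Continuity of a parametric integral with bounded continuous integrand. -/
lemma cont_param (ν : Measure E) [IsFiniteMeasure ν]
    {X : Type*} [TopologicalSpace X] [FirstCountableTopology X]
    {g : X → E → ℝ} (hg1 : ∀ p, Continuous (g p)) (hg2 : ∀ y, Continuous fun p => g p y)
    (hb : ∀ p y, ‖g p y‖ ≤ 1) :
    Continuous fun p : X => ∫ y, g p y ∂ν := by
  refine continuous_of_dominated (bound := fun _ => 1) ?_ ?_ (integrable_const 1) ?_
  · intro p; exact (hg1 p).aestronglyMeasurable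
  · intro p; exact Filter.Eventually.of_forall fun y => hb p y
  · exact Filter.Eventually.of_forall fun y => hg2 y

lemma ch_mul_conj (ω x y : E) :
    ch ω x * (starRingEnd ℂ) (ch ω y) = ch ω (x - y) := by
  unfold ch
  rw [← Complex.exp_conj, ← Complex.exp_add]
  congr 1
  rw [map_mul, Complex.conj_I, Complex.conj_ofReal, inner_sub_right]
  push_cast
  ring

lemma cos_eq_re (ω z : E) : Real.cos (⟪ω, z⟫) = (ch ω z).re := by
  rw [ch, Complex.exp_ofReal_mul_I_re]

/-- Norm bound for the characteristic function. -/
lemma norm_Phi_le (μ : Measure E) [IsProbabilityMeasure μ] (ω : E) :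
    ‖∫ x, ch ω x ∂μ‖ ≤ 1 := by
  calc ‖∫ x, ch ω x ∂μ‖ ≤ ∫ x, ‖ch ω x‖ ∂μ := norm_integral_le_integral_norm _
    _ = 1 := by simp only [norm_ch]; simp

lemma Phi_cont (μ : Measure E) [IsProbabilityMeasure μ] :
    Continuous fun ω : E => ∫ x, ch ω x ∂μ := by
  refine continuous_of_dominated (bound := fun _ => 1) ?_ ?_ (integrable_const 1) ?_
  · intro ω; exact (ch_cont_right ω).aestronglyMeasurable
  · intro ω; exact Filter.Eventually.of_forall fun x => (norm_ch ω x).le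
  · exact Filter.Eventually.of_forall fun x => ch_cont_left x

/-- Key Fubini computation. -/
lemma kern (Λ μ ν : Measure E) [IsFiniteMeasure Λ]
    [IsProbabilityMeasure μ] [IsProbabilityMeasure ν] :
    ∫ x, ∫ y, (∫ ω, Real.cos (⟪ω, x - y⟫) ∂Λ) ∂ν ∂μ
      = ∫ ω, ((∫ x, ch ω x ∂μ) * (starRingEnd ℂ) (∫ y, ch ω y ∂ν)).re ∂Λ := by
  have hbd : ∀ (t : ℝ), ‖Real.cos t‖ ≤ 1 := fun t =>
    abs_le.mpr ⟨Real.neg_one_le_cos _, Real.cos_le_one _⟩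
  -- Step 1: swap inner integral with Λ for each fixed x
  have step1 : ∀ x : E, ∫ y, (∫ ω, Real.cos (⟪ω, x - y⟫) ∂Λ) ∂ν
      = ∫ ω, (∫ y, Real.cos (⟪ω, x - y⟫) ∂ν) ∂Λ := by
    intro x
    refine integral_integral_swap (integrable_of_cont_bdd _ ?_ 1 ?_)
    · show Continuous fun q : E × E => Real.cos (⟪q.2, x - q.1⟫)
      exact Real.continuous_cos.comp
        (Continuous.inner continuous_snd (continuous_const.sub continuous_fst))
    · intro a; exact hbd _
  -- Step 2: swap outer integral with Λ
  have step2 : ∫ x, ∫ ω, (∫ y, Real.cos (⟪ω, x - y⟫) ∂ν) ∂Λ ∂μ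
      = ∫ ω, ∫ x, (∫ y, Real.cos (⟪ω, x - y⟫) ∂ν) ∂μ ∂Λ := by
    refine integral_integral_swap (integrable_of_cont_bdd _ ?_ 1 ?_)
    · show Continuous fun q : E × E => ∫ y, Real.cos (⟪q.2, q.1 - y⟫) ∂ν
      refine cont_param (X := E × E) ν (g := fun p y => Real.cos (⟪p.2, p.1 - y⟫))
        ?_ ?_ (fun p y => hbd _)
      · intro p
        exact Real.continuous_cos.comp
          (Continuous.inner continuous_const (continuous_const.sub continuous_id))
      · intro y
        exact Real.continuous_cos.comp
          (Continuous.inner continuous_snd (continuous_fst.sub continuous_const))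
    · intro a
      calc ‖∫ y, Real.cos (⟪a.2, a.1 - y⟫) ∂ν‖ ≤ ∫ y, ‖Real.cos (⟪a.2, a.1 - y⟫)‖ ∂ν :=
            norm_integral_le_integral_norm _
        _ ≤ ∫ (_ : E), 1 ∂ν := by
            refine integral_mono_of_nonneg
              (Filter.Eventually.of_forall fun y => norm_nonneg _)
              (integrable_const 1) (Filter.Eventually.of_forall fun y => hbd _)
        _ = 1 := by simp
  -- Step 3: compute the inner double integral
  have step3 : ∀ ω : E, ∫ x, (∫ y, Real.cos (⟪ω, x - y⟫) ∂ν) ∂μ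
      = ((∫ x, ch ω x ∂μ) * (starRingEnd ℂ) (∫ y, ch ω y ∂ν)).re := by
    intro ω
    have inner_eq : ∀ x : E, ∫ y, Real.cos (⟪ω, x - y⟫) ∂ν
        = (ch ω x * (starRingEnd ℂ) (∫ y, ch ω y ∂ν)).re := by
      intro x
      have h1 : ∀ y : E, Real.cos (⟪ω, x - y⟫) = (ch ω x * (starRingEnd ℂ) (ch ω y)).re := by
        intro y; rw [ch_mul_conj, cos_eq_re]
      simp_rw [h1]
      have h2 : Integrable (fun y => ch ω x * (starRingEnd ℂ) (ch ω y)) ν := by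
        refine integrable_of_cont_bdd _ ?_ 1 ?_
        · exact continuous_const.mul (Complex.continuous_conj.comp (ch_cont_right ω))
        · intro y; rw [norm_mul, norm_ch, RCLike.norm_conj, norm_ch]; norm_num
      have h3 := integral_re (μ := ν) h2
      rw [RCLike.re_eq_complex_re] at h3
      rw [h3]
      congr 1
      simp_rw [show ∀ y : E, ch ω x * (starRingEnd ℂ) (ch ω y)
          = ch ω x • (starRingEnd ℂ) (ch ω y) from fun y => rfl]
      rw [integral_smul, integral_conj]
      rfl
    simp_rw [inner_eq]
    have h3 : Integrable (fun x => ch ω x * (starRingEnd ℂ) (∫ y, ch ω y ∂ν)) μ := by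
      refine integrable_of_cont_bdd _ ?_ 1 ?_
      · exact (ch_cont_right ω).mul continuous_const
      · intro x
        rw [norm_mul, norm_ch, one_mul, RCLike.norm_conj]
        exact norm_Phi_le ν ω
    have h4 := integral_re (μ := μ) h3
    rw [RCLike.re_eq_complex_re] at h4
    rw [h4]
    congr 1
    simp_rw [mul_comm (ch ω _) ((starRingEnd ℂ) (∫ y, ch ω y ∂ν)),
      show ∀ x : E, (starRingEnd ℂ) (∫ y, ch ω y ∂ν) * ch ω x
        = (starRingEnd ℂ) (∫ y, ch ω y ∂ν) • ch ω x from fun x => rfl]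
    rw [integral_smul]
    simp [mul_comm]
  calc ∫ x, ∫ y, (∫ ω, Real.cos (⟪ω, x - y⟫) ∂Λ) ∂ν ∂μ
      = ∫ x, ∫ ω, (∫ y, Real.cos (⟪ω, x - y⟫) ∂ν) ∂Λ ∂μ :=
        integral_congr_ae (Filter.Eventually.of_forall step1)
    _ = ∫ ω, ∫ x, (∫ y, Real.cos (⟪ω, x - y⟫) ∂ν) ∂μ ∂Λ := step2
    _ = ∫ ω, ((∫ x, ch ω x ∂μ) * (starRingEnd ℂ) (∫ y, ch ω y ∂ν)).re ∂Λ :=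
        integral_congr_ae (Filter.Eventually.of_forall step3)

end MMDAux

open MMDAux in
theorem mmd_spectral (d : ℕ) (P Q Λ : Measure (EuclideanSpace ℝ (Fin d)))
    [IsProbabilityMeasure P] [IsProbabilityMeasure Q] [IsFiniteMeasure Λ]
    (ψ : EuclideanSpace ℝ (Fin d) → ℝ)
    (hψ : ∀ x, ψ x = ∫ ω, Real.cos (⟪ω, x⟫) ∂Λ)
    (φP φQ : EuclideanSpace ℝ (Fin d) → ℂ)
    (hφP : ∀ ω, φP ω = ∫ x, Complex.exp ((⟪ω, x⟫ : ℂ) * Complex.I) ∂P)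
    (hφQ : ∀ ω, φQ ω = ∫ y, Complex.exp ((⟪ω, y⟫ : ℂ) * Complex.I) ∂Q) :
    (∫ x, ∫ y, ψ (x - y) ∂P ∂P) + (∫ x, ∫ y, ψ (x - y) ∂Q ∂Q) -
      2 * ∫ x, ∫ y, ψ (x - y) ∂Q ∂P =
    ∫ ω, ‖φP ω - φQ ω‖ ^ 2 ∂Λ := by
  have hP : ∀ ω, φP ω = ∫ x, ch ω x ∂P := hφP
  have hQ : ∀ ω, φQ ω = ∫ x, ch ω x ∂Q := hφQ
  simp only [hψ]
  rw [kern Λ P P, kern Λ Q Q, kern Λ P Q]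
  have key : ∀ (μ ν : Measure (EuclideanSpace ℝ (Fin d))), IsProbabilityMeasure μ →
      IsProbabilityMeasure ν →
      Integrable (fun ω => ((∫ x, ch ω x ∂μ) * (starRingEnd ℂ) (∫ y, ch ω y ∂ν)).re) Λ := by
    intro μ ν hμ hν
    refine integrable_of_cont_bdd _ ?_ 1 ?_
    · exact Complex.continuous_re.comp
        ((Phi_cont μ).mul (Complex.continuous_conj.comp (Phi_cont ν)))
    · intro ω
      calc ‖((∫ x, ch ω x ∂μ) * (starRingEnd ℂ) (∫ y, ch ω y ∂ν)).re‖
          ≤ ‖(∫ x, ch ω x ∂μ) * (starRingEnd ℂ) (∫ y, ch ω y ∂ν)‖ :=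
            Complex.abs_re_le_norm _
        _ ≤ 1 := by
            rw [norm_mul, RCLike.norm_conj]
            exact mul_le_one₀ (norm_Phi_le μ ω) (norm_nonneg _) (norm_Phi_le ν ω)
  have e1 := integral_add (key P P ‹_› ‹_›) (key Q Q ‹_› ‹_›)
  have e2 := integral_add (key P Q ‹_› ‹_›) (key P Q ‹_› ‹_›)
  have e3 := integral_sub ((key P P ‹_› ‹_›).add (key Q Q ‹_› ‹_›))
    ((key P Q ‹_› ‹_›).add (key P Q ‹_› ‹_›))
  simp only [Pi.add_apply, Pi.sub_apply] at e1 e2 e3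
  rw [← e1, two_mul, ← e2, ← e3]
  refine integral_congr_ae (Filter.Eventually.of_forall fun ω => ?_)
  dsimp only
  rw [hP, hQ]
  set a := ∫ x, ch ω x ∂P
  set b := ∫ x, ch ω x ∂Q
  simp only [Complex.sq_norm, Complex.normSq_apply, Complex.mul_re, Complex.conj_re,
    Complex.conj_im, Complex.sub_re, Complex.sub_im]
  ring
end
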